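/- Let a ∈ ℝ, ℓ > 0, δ > 0, integers m, m', n ≥ 1 with m ≠ m', 0 < ε < 1/2 and K > 0, and let χ : ℝ → ℝ be continuously differentiable with 0 ≤ χ(x) ≤ 1 for all x, χ(x) = 1 for all x ∈ [ε, 1−ε], and |χ′(x)| ≤ K/ε for all x. Define ψ_{m,n}(x,y) = χ((x−a)/ℓ)·sin(πm(x−a)/ℓ)·sin(πny/δ) and similarly ψ_{m',n}. Then | ∫_{[a,a+ℓ]×[0,δ]} ψ_{m,n}(x,y)·ψ_{m',n}(x,y) dx dy | ≤ 4K·ℓ·δ/|m − m'|. -/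

import Mathlib

open Real MeasureTheory intervalIntegral

theorem stmt_15_auxA (ε K : ℝ) (hε : 0 < ε) (hε' : ε < 1/2) (hK : 0 < K)
    (χ : ℝ → ℝ) (hχ_diff : ContDiff ℝ 1 χ)
    (hχ_nonneg : ∀ x, 0 ≤ χ x) (hχ_le : ∀ x, χ x ≤ 1)
    (hχ_one : ∀ x ∈ Set.Icc ε (1 - ε), χ x = 1)
    (hχ' : ∀ x, |deriv χ x| ≤ K / ε)
    (j : ℕ) (hj : 1 ≤ j) :
    |∫ t in (0:ℝ)..1, χ t ^ 2 * Real.cos (π * j * t)| ≤ 4 * K / (π * j) := by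
  have hχc : Continuous χ := hχ_diff.continuous
  have hχd : Differentiable ℝ χ := hχ_diff.differentiable one_ne_zero
  have hχ'c : Continuous (deriv χ) := hχ_diff.continuous_deriv le_rfl
  have hjR : (0:ℝ) < j := by exact_mod_cast hj
  have hc : (0:ℝ) < π * j := mul_pos Real.pi_pos hjR
  set c : ℝ := π * j with hcdef
  -- derivative of χ^2
  have hu : ∀ x : ℝ, HasDerivAt (fun t => χ t ^ 2) (2 * χ x * deriv χ x) x := by
    intro x
    have := ((hχd x).hasDerivAt).fun_pow 2
    simpa [mul_comm, mul_assoc, mul_left_comm] using this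
  -- derivative of sin(c t)/c
  have hv : ∀ x : ℝ, HasDerivAt (fun t => Real.sin (c * t) / c) (Real.cos (c * x)) x := by
    intro x
    have h1 : HasDerivAt (fun t : ℝ => c * t) c x := by
      simpa using (hasDerivAt_id x).const_mul c
    have h2 := (Real.hasDerivAt_sin (c * x)).comp x h1
    have h3 := h2.div_const c
    have : Real.cos (c * x) * c / c = Real.cos (c * x) := by
      field_simp
    simpa [this] using h3
  have hu'int : IntervalIntegrable (fun x => 2 * χ x * deriv χ x) volume 0 1 :=
    (((continuous_const.mul hχc).mul hχ'c)).intervalIntegrable _ _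
  have hv'int : IntervalIntegrable (fun x => Real.cos (c * x)) volume 0 1 :=
    (Real.continuous_cos.comp (continuous_const.mul continuous_id)).intervalIntegrable _ _
  have ibp := intervalIntegral.integral_mul_deriv_eq_deriv_mul
    (u := fun t => χ t ^ 2) (v := fun t => Real.sin (c * t) / c)
    (u' := fun x => 2 * χ x * deriv χ x) (v' := fun x => Real.cos (c * x))
    (fun x _ => hu x) (fun x _ => hv x) hu'int hv'int
  have hv1 : Real.sin (c * 1) / c = 0 := by
    rw [mul_one, hcdef, mul_comm, Real.sin_nat_mul_pi]
    simp
  have hv0 : Real.sin (c * 0) / c = 0 := by simp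
  simp only [hv1, hv0] at ibp
  have key : (∫ t in (0:ℝ)..1, χ t ^ 2 * Real.cos (c * t))
      = - ∫ t in (0:ℝ)..1, (2 * χ t * deriv χ t) * (Real.sin (c * t) / c) := by
    rw [ibp]; ring
  -- deriv χ vanishes on [ε, 1-ε]
  have hd0 : ∀ t ∈ Set.Icc ε (1 - ε), deriv χ t = 0 := by
    intro t ht
    have hmax : IsLocalMax χ t := by
      apply Filter.Eventually.of_forall
      intro y
      rw [hχ_one t ht]; exact hχ_le y
    exact hmax.deriv_eq_zero
  set g : ℝ → ℝ := fun t => (2 * χ t * deriv χ t) * (Real.sin (c * t) / c) with hgdef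
  have hgc : Continuous g := by
    apply (((continuous_const.mul hχc).mul hχ'c)).mul
    exact (Real.continuous_sin.comp (continuous_const.mul continuous_id)).div_const c
  have hεle : ε ≤ 1 - ε := by linarith
  have hsplit : (∫ t in (0:ℝ)..1, g t)
      = (∫ t in (0:ℝ)..ε, g t) + (∫ t in ε..(1-ε), g t) + (∫ t in (1-ε)..1, g t) := by
    rw [intervalIntegral.integral_add_adjacent_intervals (hgc.intervalIntegrable _ _)
      (hgc.intervalIntegrable _ _),
      intervalIntegral.integral_add_adjacent_intervals (hgc.intervalIntegrable _ _)
      (hgc.intervalIntegrable _ _)]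
  have hmid : (∫ t in ε..(1-ε), g t) = 0 := by
    rw [intervalIntegral.integral_congr (g := fun _ => (0:ℝ)) ?_, intervalIntegral.integral_zero]
    intro t ht
    rw [Set.uIcc_of_le hεle] at ht
    simp [hgdef, hd0 t ht]
  -- pointwise bound for g
  have hgbound : ∀ t : ℝ, |g t| ≤ 2 * K / (ε * c) := by
    intro t
    have h1 : |2 * χ t * deriv χ t| ≤ 2 * (K / ε) := by
      rw [abs_mul, abs_mul, abs_two, abs_of_nonneg (hχ_nonneg t)]
      calc 2 * χ t * |deriv χ t| ≤ 2 * 1 * (K / ε) := by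
            apply mul_le_mul _ (hχ' t) (abs_nonneg _) (by norm_num)
            have := hχ_le t; nlinarith [hχ_nonneg t]
        _ = 2 * (K / ε) := by ring
    have h2 : |Real.sin (c * t) / c| ≤ 1 / c := by
      rw [abs_div, abs_of_pos hc]
      gcongr
      exact abs_le.mpr ⟨Real.neg_one_le_sin _, Real.sin_le_one _⟩
    calc |g t| = |2 * χ t * deriv χ t| * |Real.sin (c * t) / c| := abs_mul _ _
      _ ≤ (2 * (K / ε)) * (1 / c) := by
          exact mul_le_mul h1 h2 (abs_nonneg _) (by positivity)
      _ = 2 * K / (ε * c) := by field_simp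
  have hleft : |∫ t in (0:ℝ)..ε, g t| ≤ 2 * K / c := by
    have := intervalIntegral.norm_integral_le_of_norm_le_const
      (C := 2 * K / (ε * c)) (f := g) (a := (0:ℝ)) (b := ε) (fun x _ => hgbound x)
    rw [Real.norm_eq_abs] at this
    calc |∫ t in (0:ℝ)..ε, g t| ≤ 2 * K / (ε * c) * |ε - 0| := this
      _ = 2 * K / c := by rw [sub_zero, abs_of_pos hε]; field_simp
  have hright : |∫ t in (1-ε)..1, g t| ≤ 2 * K / c := by
    have := intervalIntegral.norm_integral_le_of_norm_le_const
      (C := 2 * K / (ε * c)) (f := g) (a := (1-ε:ℝ)) (b := 1) (fun x _ => hgbound x)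
    rw [Real.norm_eq_abs] at this
    calc |∫ t in (1-ε)..1, g t| ≤ 2 * K / (ε * c) * |1 - (1 - ε)| := this
      _ = 2 * K / c := by
          have : |1 - (1 - ε)| = ε := by rw [abs_of_pos]; ring_nf; linarith
          rw [this]; field_simp
  calc |∫ t in (0:ℝ)..1, χ t ^ 2 * Real.cos (c * t)|
      = |∫ t in (0:ℝ)..1, g t| := by rw [key, abs_neg]
    _ = |(∫ t in (0:ℝ)..ε, g t) + (∫ t in ε..(1-ε), g t) + (∫ t in (1-ε)..1, g t)| := by
        rw [hsplit]
    _ ≤ |∫ t in (0:ℝ)..ε, g t| + |∫ t in ε..(1-ε), g t| + |∫ t in (1-ε)..1, g t| := by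
        exact (abs_add_le _ _).trans (add_le_add_left (abs_add_le _ _) _)
    _ ≤ 2 * K / c + 0 + 2 * K / c := by
        rw [hmid]; simp; exact add_le_add hleft hright
    _ = 4 * K / c := by ring

theorem stmt_15_auxB0 (ε K : ℝ) (hε : 0 < ε) (hε' : ε < 1/2) (hK : 0 < K)
    (χ : ℝ → ℝ) (hχ_diff : ContDiff ℝ 1 χ)
    (hχ_nonneg : ∀ x, 0 ≤ χ x) (hχ_le : ∀ x, χ x ≤ 1)
    (hχ_one : ∀ x ∈ Set.Icc ε (1 - ε), χ x = 1)
    (hχ' : ∀ x, |deriv χ x| ≤ K / ε)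
    (m m' : ℕ) (hm' : 1 ≤ m') (hlt : m' < m) :
    |∫ t in (0:ℝ)..1, χ t ^ 2 * (Real.sin (π * m * t) * Real.sin (π * m' * t))|
      ≤ 4 * K / ((m:ℝ) - (m':ℝ)) := by
  have hχc : Continuous χ := hχ_diff.continuous
  set j : ℕ := m - m' with hjdef
  have hj : 1 ≤ j := by omega
  have hjcast : (j:ℝ) = (m:ℝ) - (m':ℝ) := by
    rw [hjdef, Nat.cast_sub hlt.le]
  set s : ℕ := m + m' with hsdef
  have hs : 1 ≤ s := by omega
  have hscast : (s:ℝ) = (m:ℝ) + (m':ℝ) := by push_cast [hsdef]; ring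
  have hid : ∀ t : ℝ, χ t ^ 2 * (Real.sin (π * m * t) * Real.sin (π * m' * t))
      = (1/2) * (χ t ^ 2 * Real.cos (π * j * t)) - (1/2) * (χ t ^ 2 * Real.cos (π * s * t)) := by
    intro t
    have h1 : π * (j:ℝ) * t = π * m * t - π * m' * t := by rw [hjcast]; ring
    have h2 : π * (s:ℝ) * t = π * m * t + π * m' * t := by rw [hscast]; ring
    rw [h1, h2, Real.cos_sub, Real.cos_add]
    ring
  have hint : ∀ k : ℕ, IntervalIntegrable (fun t => χ t ^ 2 * Real.cos (π * k * t)) volume 0 1 :=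
    fun k => ((hχc.pow 2).mul
      (Real.continuous_cos.comp (continuous_const.mul continuous_id))).intervalIntegrable _ _
  have hsplit : (∫ t in (0:ℝ)..1, χ t ^ 2 * (Real.sin (π * m * t) * Real.sin (π * m' * t)))
      = (1/2) * (∫ t in (0:ℝ)..1, χ t ^ 2 * Real.cos (π * j * t))
        - (1/2) * (∫ t in (0:ℝ)..1, χ t ^ 2 * Real.cos (π * s * t)) := by
    rw [← intervalIntegral.integral_const_mul, ← intervalIntegral.integral_const_mul,
      ← intervalIntegral.integral_sub ((hint j).const_mul _) ((hint s).const_mul _)]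
    apply intervalIntegral.integral_congr
    intro t _
    exact hid t
  have hA := stmt_15_auxA ε K hε hε' hK χ hχ_diff hχ_nonneg hχ_le hχ_one hχ' j hj
  have hA' := stmt_15_auxA ε K hε hε' hK χ hχ_diff hχ_nonneg hχ_le hχ_one hχ' s hs
  have hjR : (0:ℝ) < j := by exact_mod_cast hj
  have hsR : (0:ℝ) < s := by exact_mod_cast hs
  have hjs : (j:ℝ) ≤ (s:ℝ) := by
    have : j ≤ s := by omega
    exact_mod_cast this
  have hπ1 : (1:ℝ) ≤ π := by linarith [Real.pi_gt_three]
  calc |∫ t in (0:ℝ)..1, χ t ^ 2 * (Real.sin (π * m * t) * Real.sin (π * m' * t))|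
      ≤ (1/2) * |∫ t in (0:ℝ)..1, χ t ^ 2 * Real.cos (π * j * t)|
        + (1/2) * |∫ t in (0:ℝ)..1, χ t ^ 2 * Real.cos (π * s * t)| := by
        rw [hsplit]
        calc |(1/2) * _ - (1/2) * _| ≤ |(1/2) * (∫ t in (0:ℝ)..1, χ t ^ 2 * Real.cos (π * j * t))|
              + |(1/2) * (∫ t in (0:ℝ)..1, χ t ^ 2 * Real.cos (π * s * t))| := abs_sub _ _
          _ = _ := by rw [abs_mul, abs_mul]; norm_num [abs_of_nonneg]
    _ ≤ (1/2) * (4 * K / (π * j)) + (1/2) * (4 * K / (π * s)) := by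
        gcongr
    _ ≤ (1/2) * (4 * K / (π * j)) + (1/2) * (4 * K / (π * j)) := by
        gcongr
    _ = 4 * K / (π * j) := by ring
    _ ≤ 4 * K / (j:ℝ) := by
        apply div_le_div_of_nonneg_left (by positivity) hjR
        nlinarith
    _ = 4 * K / ((m:ℝ) - (m':ℝ)) := by rw [hjcast]

theorem stmt_15_auxB (ε K : ℝ) (hε : 0 < ε) (hε' : ε < 1/2) (hK : 0 < K)
    (χ : ℝ → ℝ) (hχ_diff : ContDiff ℝ 1 χ)
    (hχ_nonneg : ∀ x, 0 ≤ χ x) (hχ_le : ∀ x, χ x ≤ 1)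
    (hχ_one : ∀ x ∈ Set.Icc ε (1 - ε), χ x = 1)
    (hχ' : ∀ x, |deriv χ x| ≤ K / ε)
    (m m' : ℕ) (hm : 1 ≤ m) (hm' : 1 ≤ m') (hne : m ≠ m') :
    |∫ t in (0:ℝ)..1, χ t ^ 2 * (Real.sin (π * m * t) * Real.sin (π * m' * t))|
      ≤ 4 * K / |(m:ℝ) - (m':ℝ)| := by
  rcases lt_or_gt_of_ne hne with h | h
  · have hswap : (∫ t in (0:ℝ)..1, χ t ^ 2 * (Real.sin (π * m * t) * Real.sin (π * m' * t)))
        = ∫ t in (0:ℝ)..1, χ t ^ 2 * (Real.sin (π * m' * t) * Real.sin (π * m * t)) := by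
      apply intervalIntegral.integral_congr
      intro t _
      ring
    have habs : |(m:ℝ) - (m':ℝ)| = (m':ℝ) - (m:ℝ) := by
      rw [abs_sub_comm, abs_of_pos]
      have : (m:ℝ) < m' := by exact_mod_cast h
      linarith
    rw [hswap, habs]
    exact stmt_15_auxB0 ε K hε hε' hK χ hχ_diff hχ_nonneg hχ_le hχ_one hχ' m' m hm h
  · have habs : |(m:ℝ) - (m':ℝ)| = (m:ℝ) - (m':ℝ) := by
      rw [abs_of_pos]
      have : (m':ℝ) < m := by exact_mod_cast h
      linarith
    rw [habs]
    exact stmt_15_auxB0 ε K hε hε' hK χ hχ_diff hχ_nonneg hχ_le hχ_one hχ' m m' hm' h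

theorem stmt_15 (a ℓ δ : ℝ) (hℓ : 0 < ℓ) (hδ : 0 < δ)
    (m m' n : ℕ) (hm : 1 ≤ m) (hm' : 1 ≤ m') (hn : 1 ≤ n) (hmm' : m ≠ m')
    (ε K : ℝ) (hε : 0 < ε) (hε' : ε < 1 / 2) (hK : 0 < K)
    (χ : ℝ → ℝ) (hχ_diff : ContDiff ℝ 1 χ)
    (hχ_nonneg : ∀ x, 0 ≤ χ x) (hχ_le : ∀ x, χ x ≤ 1)
    (hχ_one : ∀ x ∈ Set.Icc ε (1 - ε), χ x = 1)
    (hχ' : ∀ x, |deriv χ x| ≤ K / ε)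
    (ψ ψ' : ℝ → ℝ → ℝ)
    (hψ : ∀ x y, ψ x y =
      χ ((x - a) / ℓ) * Real.sin (π * m * (x - a) / ℓ) * Real.sin (π * n * y / δ))
    (hψ' : ∀ x y, ψ' x y =
      χ ((x - a) / ℓ) * Real.sin (π * m' * (x - a) / ℓ) * Real.sin (π * n * y / δ)) :
    |∫ z in Set.Icc a (a + ℓ) ×ˢ Set.Icc (0 : ℝ) δ, ψ z.1 z.2 * ψ' z.1 z.2|
      ≤ 4 * K * ℓ * δ / |(m : ℝ) - (m' : ℝ)| := by
  set Φ : ℝ → ℝ := fun t => χ t ^ 2 * (Real.sin (π * m * t) * Real.sin (π * m' * t)) with hΦ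
  have harg : ∀ (k : ℕ) (x : ℝ), π * k * (x - a) / ℓ = π * k * ((x - a) / ℓ) := by
    intro k x; ring
  have hprod : ∀ x y : ℝ, ψ x y * ψ' x y = Φ ((x - a) / ℓ) * Real.sin (π * n * y / δ) ^ 2 := by
    intro x y
    rw [hψ, hψ', hΦ]
    simp only
    rw [harg m x, harg m' x]
    ring
  simp_rw [hprod]
  rw [Measure.volume_eq_prod, MeasureTheory.setIntegral_prod_mul (f := fun x => Φ ((x - a) / ℓ))
    (g := fun y => Real.sin (π * n * y / δ) ^ 2)]
  have hB := stmt_15_auxB ε K hε hε' hK χ hχ_diff hχ_nonneg hχ_le hχ_one hχ' m m' hm hm' hmm'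
  -- the x integral
  have hx : (∫ x in Set.Icc a (a + ℓ), Φ ((x - a) / ℓ)) = ℓ * ∫ t in (0:ℝ)..1, Φ t := by
    rw [MeasureTheory.integral_Icc_eq_integral_Ioc,
      ← intervalIntegral.integral_of_le (by linarith : a ≤ a + ℓ)]
    rw [show (∫ x in a..(a + ℓ), Φ ((x - a) / ℓ)) = ∫ x in (a - a)..(a + ℓ - a), Φ (x / ℓ) from
      intervalIntegral.integral_comp_sub_right (fun x => Φ (x / ℓ)) a]
    rw [sub_self, add_sub_cancel_left]
    rw [show (∫ x in (0:ℝ)..ℓ, Φ (x / ℓ)) = ℓ • ∫ x in (0/ℓ:ℝ)..(ℓ/ℓ), Φ x from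
      intervalIntegral.integral_comp_div (c := ℓ) Φ hℓ.ne']
    rw [zero_div, div_self hℓ.ne', smul_eq_mul]
  have hxb : |∫ x in Set.Icc a (a + ℓ), Φ ((x - a) / ℓ)| ≤ ℓ * (4 * K / |(m:ℝ) - (m':ℝ)|) := by
    rw [hx, abs_mul, abs_of_pos hℓ]
    exact mul_le_mul_of_nonneg_left hB hℓ.le
  have hyb : |∫ y in Set.Icc (0:ℝ) δ, Real.sin (π * n * y / δ) ^ 2| ≤ δ := by
    rw [MeasureTheory.integral_Icc_eq_integral_Ioc,
      ← intervalIntegral.integral_of_le hδ.le]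
    have := intervalIntegral.norm_integral_le_of_norm_le_const (C := 1)
      (f := fun y => Real.sin (π * n * y / δ) ^ 2) (a := (0:ℝ)) (b := δ) ?_
    · rw [Real.norm_eq_abs, sub_zero, abs_of_pos hδ, one_mul] at this
      exact this
    · intro y _
      rw [Real.norm_eq_abs, abs_of_nonneg (sq_nonneg _)]
      exact Real.sin_sq_le_one _
  rw [abs_mul]
  calc |∫ x in Set.Icc a (a + ℓ), Φ ((x - a) / ℓ)| * |∫ y in Set.Icc (0:ℝ) δ, Real.sin (π * n * y / δ) ^ 2|
      ≤ (ℓ * (4 * K / |(m:ℝ) - (m':ℝ)|)) * δ := by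
        apply mul_le_mul hxb hyb (abs_nonneg _)
        positivity
    _ = 4 * K * ℓ * δ / |(m:ℝ) - (m':ℝ)| := by ring
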